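/- For all α, β ∈ ℕ, the inclusion G ⊆ 𝔾 induces a bijection of double coset spaces K[α]\G/K[β] → 𝕂[α]\𝔾/𝕂[β]. Concretely: (i) every double coset 𝕂[α]·g·𝕂[β] with g ∈ 𝔾 contains an element of G; and (ii) for p, q ∈ G, 𝕂[α]·p·𝕂[β] = 𝕂[α]·q·𝕂[β] if and only if K[α]·p·K[β] = K[α]·q·K[β]. -/

import Mathlib

open Equiv

abbrev P3 := Equiv.Perm ℕ × Equiv.Perm ℕ × Equiv.Perm ℕ

/-- The subgroup of finitely supported permutations of `ℕ`. -/
def Sinf : Subgroup (Equiv.Perm ℕ) where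
  carrier := {g | {x | g x ≠ x}.Finite}
  one_mem' := by
    show Set.Finite {x | (1 : Equiv.Perm ℕ) x ≠ x}
    convert Set.finite_empty
    ext x; simp
  mul_mem' {f g} hf hg := by
    apply Set.Finite.subset (hf.union hg)
    intro x hx
    simp only [Set.mem_setOf_eq, Set.mem_union, Equiv.Perm.mul_apply] at hx ⊢
    by_contra hc
    push_neg at hc
    rw [hc.2] at hx
    exact hx hc.1
  inv_mem' {g} hg := by
    apply Set.Finite.subset hg
    intro x hx
    simp only [Set.mem_setOf_eq] at hx ⊢
    intro h
    apply hx
    apply g.injective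
    rw [show ∀ y, g (g⁻¹ y) = y from g.apply_symm_apply, h]

/-- Permutations fixing every point `< α`. -/
def fixLt (α : ℕ) : Subgroup (Equiv.Perm ℕ) where
  carrier := {g | ∀ i < α, g i = i}
  one_mem' := fun _ _ => rfl
  mul_mem' {f g} hf hg := fun i hi => by
    simp only [Equiv.Perm.mul_apply, hg i hi, hf i hi]
  inv_mem' {g} hg := fun i hi => by
    apply g.injective
    rw [show ∀ y, g (g⁻¹ y) = y from g.apply_symm_apply, hg i hi]

/-- The diagonal embedding of `Perm ℕ` into the triple product. -/
def diag3 : Equiv.Perm ℕ →* P3 where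
  toFun h := (h, h, h)
  map_one' := rfl
  map_mul' _ _ := rfl

/-- `G = S_∞ × S_∞ × S_∞`. -/
def Ggrp : Subgroup P3 := Sinf.prod (Sinf.prod Sinf)

/-- `K[α]`: diagonal triples `(h,h,h)` with `h ∈ S_∞` fixing `0,…,α-1`. -/
def KK (α : ℕ) : Subgroup P3 := Subgroup.map diag3 (Sinf ⊓ fixLt α)

/-- The double coset `L·p·M`. -/
def dcosOf (L M : Subgroup P3) (p : P3) : Set P3 :=
  {y | ∃ a ∈ L, ∃ b ∈ M, y = a * p * b}

/-- underlying function of `θ_j[β]`. -/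
def thetaFun (β j : ℕ) (x : ℕ) : ℕ :=
  if β ≤ x ∧ x < β + j then x + j
  else if β + j ≤ x ∧ x < β + 2 * j then x - j
  else x

lemma thetaFun_invol (β j : ℕ) : ∀ x, thetaFun β j (thetaFun β j x) = x := by
  intro x
  simp only [thetaFun]
  split_ifs <;> omega

/-- `θ_j[β]`: swaps the blocks `[β, β+j)` and `[β+j, β+2j)`. -/
def theta (β j : ℕ) : Equiv.Perm ℕ :=
  ⟨thetaFun β j, thetaFun β j, thetaFun_invol β j, thetaFun_invol β j⟩

lemma theta_mem_Sinf (β j : ℕ) : theta β j ∈ Sinf := by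
  apply Set.Finite.subset (Set.finite_Iio (β + 2 * j))
  intro x hx
  simp only [Set.mem_setOf_eq, theta, Equiv.coe_fn_mk, Set.mem_Iio] at hx ⊢
  by_contra hc
  push_neg at hc
  apply hx
  simp only [thetaFun]
  split_ifs <;> omega

/-- `Θ_j[β] = (θ_j[β], θ_j[β], θ_j[β])`. -/
def ThetaP (β j : ℕ) : P3 := diag3 (theta β j)

lemma KK_le_G {α : ℕ} : KK α ≤ Ggrp := by
  rintro g ⟨h, hh, rfl⟩
  exact ⟨hh.1, hh.1, hh.1⟩

lemma Theta_mem_G (β j : ℕ) : ThetaP β j ∈ Ggrp :=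
  ⟨theta_mem_Sinf β j, theta_mem_Sinf β j, theta_mem_Sinf β j⟩

lemma conj_mem_Sinf (g : Equiv.Perm ℕ) {f : Equiv.Perm ℕ} (hf : f ∈ Sinf) :
    g * f * g⁻¹ ∈ Sinf := by
  show Set.Finite {x | (g * f * g⁻¹) x ≠ x}
  apply Set.Finite.subset ((show Set.Finite {x | f x ≠ x} from hf).image g)
  intro x hx
  simp only [Set.mem_setOf_eq, Equiv.Perm.mul_apply] at hx
  refine ⟨g⁻¹ x, ?_, g.apply_symm_apply x⟩
  intro h
  apply hx
  rw [h, show ∀ y, g (g⁻¹ y) = y from g.apply_symm_apply]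

/-- The tri-symmetric group `𝔾 = {(p,q,r) : p q⁻¹ ∈ S_∞, q r⁻¹ ∈ S_∞}`. -/
def bigG : Subgroup P3 where
  carrier := {g | g.1 * g.2.1⁻¹ ∈ Sinf ∧ g.2.1 * g.2.2⁻¹ ∈ Sinf}
  one_mem' := by constructor <;> simpa using Sinf.one_mem
  mul_mem' {a b} ha hb := by
    constructor
    · have h : (a * b).1 * (a * b).2.1⁻¹
          = a.1 * (b.1 * b.2.1⁻¹) * a.1⁻¹ * (a.1 * a.2.1⁻¹) := by
        simp only [Prod.fst_mul, Prod.snd_mul]; group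
      rw [h]
      exact mul_mem (conj_mem_Sinf _ hb.1) ha.1
    · have h : (a * b).2.1 * (a * b).2.2⁻¹
          = a.2.1 * (b.2.1 * b.2.2⁻¹) * a.2.1⁻¹ * (a.2.1 * a.2.2⁻¹) := by
        simp only [Prod.fst_mul, Prod.snd_mul]; group
      rw [h]
      exact mul_mem (conj_mem_Sinf _ hb.2) ha.2
  inv_mem' {a} ha := by
    constructor
    · have h : (a⁻¹).1 * (a⁻¹).2.1⁻¹
          = a.1⁻¹ * (a.1 * a.2.1⁻¹)⁻¹ * (a.1⁻¹)⁻¹ := by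
        simp only [Prod.fst_inv, Prod.snd_inv]; group
      rw [h]
      exact conj_mem_Sinf _ (inv_mem ha.1)
    · have h : (a⁻¹).2.1 * (a⁻¹).2.2⁻¹
          = a.2.1⁻¹ * (a.2.1 * a.2.2⁻¹)⁻¹ * (a.2.1⁻¹)⁻¹ := by
        simp only [Prod.fst_inv, Prod.snd_inv]; group
      rw [h]
      exact conj_mem_Sinf _ (inv_mem ha.2)


/-- `𝕂[α] ≤ 𝔾`: diagonal triples `(h,h,h)` with `h ∈ Perm(ℕ)` fixing `0,…,α-1`. -/
def bigKK (α : ℕ) : Subgroup P3 := Subgroup.map diag3 (fixLt α)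

lemma Equiv.Perm.apply_inv_self {X : Type*} (f : Equiv.Perm X) (x : X) : f (f⁻¹ x) = x :=
  f.apply_symm_apply x

lemma Equiv.Perm.inv_apply_self {X : Type*} (f : Equiv.Perm X) (x : X) : f⁻¹ (f x) = x :=
  f.symm_apply_apply x

lemma swap_mem_Sinf (a b : ℕ) : Equiv.swap a b ∈ Sinf := by
  show Set.Finite {x | Equiv.swap a b x ≠ x}
  apply Set.Finite.subset (Set.toFinite ({a, b} : Set ℕ))
  intro x hx
  simp only [Set.mem_setOf_eq] at hx
  by_contra hc
  simp only [Set.mem_insert_iff, Set.mem_singleton_iff] at hc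
  push_neg at hc
  exact hx (Equiv.swap_apply_of_ne_of_ne hc.1 hc.2)

/-- Any permutation agrees with some finitely supported permutation on a given finite set. -/
lemma exists_finite_agree (T : Finset ℕ) (h : Equiv.Perm ℕ) :
    ∃ s, s ∈ Sinf ∧ ∀ x ∈ T, s x = h x := by
  classical
  induction T using Finset.induction_on with
  | empty => exact ⟨1, Sinf.one_mem, fun x hx => absurd hx (Finset.notMem_empty x)⟩
  | @insert a T ha ih =>
    obtain ⟨s, hs, hag⟩ := ih
    by_cases hsa : s a = h a
    · refine ⟨s, hs, fun x hx => ?_⟩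
      rcases Finset.mem_insert.mp hx with rfl | hx
      · exact hsa
      · exact hag x hx
    · refine ⟨Equiv.swap (s a) (h a) * s, mul_mem (swap_mem_Sinf _ _) hs, fun x hx => ?_⟩
      rcases Finset.mem_insert.mp hx with rfl | hxT
      · show (Equiv.swap (s x) (h x)) (s x) = h x
        exact Equiv.swap_apply_left _ _
      · have hxa : x ≠ a := fun he => ha (he ▸ hxT)
        have h1 : s x ≠ s a := fun he => hxa (s.injective he)
        have h2 : s x ≠ h a := by
          rw [hag x hxT]; exact fun he => hxa (h.injective he)
        show (Equiv.swap (s a) (h a)) (s x) = h x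
        rw [Equiv.swap_apply_of_ne_of_ne h1 h2, hag x hxT]

lemma mem_dcos_self (L M : Subgroup P3) (p : P3) : p ∈ dcosOf L M p :=
  ⟨1, one_mem L, 1, one_mem M, by group⟩

lemma dcos_eq_of_mem (L M : Subgroup P3) {p q : P3} (h : p ∈ dcosOf L M q) :
    dcosOf L M p = dcosOf L M q := by
  obtain ⟨a, ha, b, hb, rfl⟩ := h
  ext y
  simp only [dcosOf, Set.mem_setOf_eq]
  constructor
  · rintro ⟨a', ha', b', hb', rfl⟩
    exact ⟨a' * a, mul_mem ha' ha, b * b', mul_mem hb hb', by group⟩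
  · rintro ⟨a', ha', b', hb', rfl⟩
    exact ⟨a' * a⁻¹, mul_mem ha' (inv_mem ha), b⁻¹ * b', mul_mem (inv_mem hb) hb', by group⟩

lemma dcos_eq_iff (L M : Subgroup P3) (p q : P3) :
    dcosOf L M p = dcosOf L M q ↔ p ∈ dcosOf L M q :=
  ⟨fun h => h ▸ mem_dcos_self L M p, dcos_eq_of_mem L M⟩

/-- Transfer a conjugation relation along a permutation agreeing on a large enough finite set. -/
lemma conj_transfer (u v h s : Equiv.Perm ℕ) (S : Finset ℕ)
    (hS : ∀ x, u x ≠ x → x ∈ S) (hag : ∀ x ∈ S, s x = h x)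
    (hc : ∀ x, h (u x) = v (h x)) : ∀ x, s (u x) = v (s x) := by
  intro x
  by_cases hxS : x ∈ S
  · by_cases hux : u x = x
    · rw [hux, hag x hxS, ← hc x, hux]
    · have huxS : u x ∈ S := hS _ (fun h' => hux (u.injective h'))
      rw [hag _ huxS, hag x hxS, hc x]
  · have hux : u x = x := by
      by_contra hc'; exact hxS (hS x hc')
    rw [hux]
    by_contra hne
    have h1 : u (h⁻¹ (s x)) ≠ h⁻¹ (s x) := by
      intro he
      apply hne
      have := hc (h⁻¹ (s x))
      rw [he, Equiv.Perm.apply_inv_self] at this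
      exact this
    have h2 : h⁻¹ (s x) ∈ S := hS _ h1
    have h3 : s (h⁻¹ (s x)) = s x := by rw [hag _ h2, Equiv.Perm.apply_inv_self]
    have h4 : h⁻¹ (s x) = x := s.injective h3
    exact hxS (h4 ▸ h2)

/-- The inclusion `G ⊆ 𝔾` induces a bijection of double coset spaces
`K[α]\G/K[β] → 𝕂[α]\𝔾/𝕂[β]`: (i) every double coset `𝕂[α]·g·𝕂[β]`, `g ∈ 𝔾`, meets `G`;
(ii) two elements of `G` lie in the same `𝕂[α]–𝕂[β]` double coset iff they lie in the
same `K[α]–K[β]` double coset. -/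
theorem doubleCosets_G_eq_doubleCosets_bigG (α β : ℕ) :
    (∀ g ∈ bigG, ∃ p ∈ Ggrp, p ∈ dcosOf (bigKK α) (bigKK β) g) ∧
    (∀ p ∈ Ggrp, ∀ q ∈ Ggrp,
      (dcosOf (bigKK α) (bigKK β) p = dcosOf (bigKK α) (bigKK β) q ↔
        dcosOf (KK α) (KK β) p = dcosOf (KK α) (KK β) q)) := by
  constructor
  · -- part (i)
    intro g hg
    obtain ⟨s, hs, hag⟩ :=
      exists_finite_agree ((Finset.range α).image (g.2.1⁻¹ : Equiv.Perm ℕ)) g.2.1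
    have hfix : s * g.2.1⁻¹ ∈ fixLt α := by
      intro i hi
      have : (g.2.1⁻¹ : Equiv.Perm ℕ) i ∈ (Finset.range α).image (g.2.1⁻¹ : Equiv.Perm ℕ) :=
        Finset.mem_image.mpr ⟨i, Finset.mem_range.mpr hi, rfl⟩
      show s (g.2.1⁻¹ i) = i
      rw [hag _ this, Equiv.Perm.apply_inv_self]
    have h1 : g.2.1⁻¹ * g.1 ∈ Sinf := by
      have := conj_mem_Sinf g.2.1⁻¹ hg.1
      rwa [show g.2.1⁻¹ * (g.1 * g.2.1⁻¹) * (g.2.1⁻¹)⁻¹ = g.2.1⁻¹ * g.1 by group] at this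
    have h2 : g.2.1⁻¹ * g.2.2 ∈ Sinf := by
      have := conj_mem_Sinf g.2.1⁻¹ (inv_mem hg.2)
      rwa [show g.2.1⁻¹ * (g.2.1 * g.2.2⁻¹)⁻¹ * (g.2.1⁻¹)⁻¹ = g.2.1⁻¹ * g.2.2 by group] at this
    refine ⟨diag3 (s * g.2.1⁻¹) * g, ⟨?_, ?_, ?_⟩, diag3 (s * g.2.1⁻¹), ⟨s * g.2.1⁻¹, hfix, rfl⟩,
      1, one_mem _, by group⟩
    · show s * g.2.1⁻¹ * g.1 ∈ Sinf
      rw [show s * g.2.1⁻¹ * g.1 = s * (g.2.1⁻¹ * g.1) by group]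
      exact mul_mem hs h1
    · show s * g.2.1⁻¹ * g.2.1 ∈ Sinf
      rw [show s * g.2.1⁻¹ * g.2.1 = s by group]
      exact hs
    · show s * g.2.1⁻¹ * g.2.2 ∈ Sinf
      rw [show s * g.2.1⁻¹ * g.2.2 = s * (g.2.1⁻¹ * g.2.2) by group]
      exact mul_mem hs h2
  · -- part (ii)
    intro p hp q hq
    rw [dcos_eq_iff, dcos_eq_iff]
    constructor
    · rintro ⟨a, ⟨h, hh, rfl⟩, b, ⟨k, hk, rfl⟩, hpe⟩
      have e1 : p.1 = h * q.1 * k := congrArg Prod.fst hpe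
      have e2 : p.2.1 = h * q.2.1 * k := congrArg (fun z : P3 => z.2.1) hpe
      have e3 : p.2.2 = h * q.2.2 * k := congrArg (fun z : P3 => z.2.2) hpe
      have hu' : q.2.1 * q.1⁻¹ ∈ Sinf := mul_mem hq.2.1 (inv_mem hq.1)
      have hu3' : q.2.2 * q.1⁻¹ ∈ Sinf := mul_mem hq.2.2 (inv_mem hq.1)
      have hu : {x | (q.2.1 * q.1⁻¹) x ≠ x}.Finite := hu'
      have hu3 : {x | (q.2.2 * q.1⁻¹) x ≠ x}.Finite := hu3'
      have hcv : ∀ x, h ((q.2.1 * q.1⁻¹) x) = (p.2.1 * p.1⁻¹) (h x) := by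
        intro x
        have : h * (q.2.1 * q.1⁻¹) = (p.2.1 * p.1⁻¹) * h := by rw [e1, e2]; group
        calc h ((q.2.1 * q.1⁻¹) x) = (h * (q.2.1 * q.1⁻¹)) x := rfl
          _ = ((p.2.1 * p.1⁻¹) * h) x := by rw [this]
          _ = (p.2.1 * p.1⁻¹) (h x) := rfl
      have hcv3 : ∀ x, h ((q.2.2 * q.1⁻¹) x) = (p.2.2 * p.1⁻¹) (h x) := by
        intro x
        have : h * (q.2.2 * q.1⁻¹) = (p.2.2 * p.1⁻¹) * h := by rw [e1, e3]; group
        calc h ((q.2.2 * q.1⁻¹) x) = (h * (q.2.2 * q.1⁻¹)) x := rfl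
          _ = ((p.2.2 * p.1⁻¹) * h) x := by rw [this]
          _ = (p.2.2 * p.1⁻¹) (h x) := rfl
      obtain ⟨s, hs, hag⟩ := exists_finite_agree
        (hu.toFinset ∪ hu3.toFinset ∪ Finset.range α ∪ (Finset.range β).image q.1) h
      have hsfix : s ∈ fixLt α := by
        intro i hi
        have : i ∈ hu.toFinset ∪ hu3.toFinset ∪ Finset.range α ∪ (Finset.range β).image q.1 := by
          simp only [Finset.mem_union, Finset.mem_range]
          exact Or.inl (Or.inr hi)
        rw [hag _ this]
        exact hh i hi
      have hsq : ∀ i < β, s (q.1 i) = p.1 i := by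
        intro i hi
        have : q.1 i ∈ hu.toFinset ∪ hu3.toFinset ∪ Finset.range α ∪ (Finset.range β).image q.1 := by
          simp only [Finset.mem_union, Finset.mem_image, Finset.mem_range]
          exact Or.inr ⟨i, hi, rfl⟩
        rw [hag _ this, e1]
        show h (q.1 i) = (h * q.1 * k) i
        calc h (q.1 i) = h (q.1 (k i)) := by rw [hk i hi]
          _ = (h * q.1 * k) i := rfl
      have hsu : s * (q.2.1 * q.1⁻¹) = (p.2.1 * p.1⁻¹) * s := by
        apply Equiv.ext
        intro x
        exact conj_transfer (q.2.1 * q.1⁻¹) (p.2.1 * p.1⁻¹) h s _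
          (fun x hx => by
            simp only [Finset.mem_union, Set.Finite.mem_toFinset, Set.mem_setOf_eq]
            exact Or.inl (Or.inl (Or.inl hx)))
          hag hcv x
      have hsu3 : s * (q.2.2 * q.1⁻¹) = (p.2.2 * p.1⁻¹) * s := by
        apply Equiv.ext
        intro x
        exact conj_transfer (q.2.2 * q.1⁻¹) (p.2.2 * p.1⁻¹) h s _
          (fun x hx => by
            simp only [Finset.mem_union, Set.Finite.mem_toFinset, Set.mem_setOf_eq]
            exact Or.inl (Or.inl (Or.inr hx)))
          hag hcv3 x
      have hk'S : q.1⁻¹ * s⁻¹ * p.1 ∈ Sinf :=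
        mul_mem (mul_mem (inv_mem hq.1) (inv_mem hs)) hp.1
      have hk'fix : q.1⁻¹ * s⁻¹ * p.1 ∈ fixLt β := by
        intro i hi
        show q.1⁻¹ (s⁻¹ (p.1 i)) = i
        rw [← hsq i hi, Equiv.Perm.inv_apply_self, Equiv.Perm.inv_apply_self]
      refine ⟨diag3 s, ⟨s, ⟨hs, hsfix⟩, rfl⟩, diag3 (q.1⁻¹ * s⁻¹ * p.1),
        ⟨q.1⁻¹ * s⁻¹ * p.1, ⟨hk'S, hk'fix⟩, rfl⟩, ?_⟩
      have c1 : p.1 = s * q.1 * (q.1⁻¹ * s⁻¹ * p.1) := by group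
      have c2 : p.2.1 = s * q.2.1 * (q.1⁻¹ * s⁻¹ * p.1) := by
        have : s * q.2.1 * (q.1⁻¹ * s⁻¹ * p.1) = (s * (q.2.1 * q.1⁻¹)) * s⁻¹ * p.1 := by group
        rw [this, hsu]; group
      have c3 : p.2.2 = s * q.2.2 * (q.1⁻¹ * s⁻¹ * p.1) := by
        have : s * q.2.2 * (q.1⁻¹ * s⁻¹ * p.1) = (s * (q.2.2 * q.1⁻¹)) * s⁻¹ * p.1 := by group
        rw [this, hsu3]; group
      exact Prod.ext c1 (Prod.ext c2 c3)
    · rintro ⟨a, ⟨h, hh, rfl⟩, b, ⟨k, hk, rfl⟩, hpe⟩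
      exact ⟨diag3 h, ⟨h, hh.2, rfl⟩, diag3 k, ⟨k, hk.2, rfl⟩, hpe⟩
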